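/- There exist absolute constants C, c > 0 such that for all positive integers n and f, every n-vertex unweighted graph G admits an f-FD 3-spanner H ⊆ G with at most C·f·n^{3/2}·(log n)^c edges. -/

import Mathlib

open SimpleGraph

/-- `F` has faulty-degree at most `f`: every vertex is incident to at most `f` edges of `F`. -/
def DegLE {V : Type} (F : Set (Sym2 V)) (f : ℕ) : Prop :=
  ∀ v : V, {e ∈ F | v ∈ e}.ncard ≤ f

/-- `H` is an `f`-faulty-degree `t`-spanner of `G` (unweighted distances, `∞` when
disconnected, natural stretch factor `t`). -/
def IsFDSpanner {V : Type} (G H : SimpleGraph V) (f t : ℕ) : Prop :=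
  H ≤ G ∧ ∀ F : Set (Sym2 V), F ⊆ G.edgeSet → DegLE F f →
    ∀ u v : V,
      (H.deleteEdges F).edist u v ≤ (t : ℕ∞) * (G.deleteEdges F).edist u v

noncomputable section FDConstruction

open Finset
open scoped Classical

variable {V : Type} [Fintype V]

/-- A good center assignment: each vertex `v` gets a set `c v` of at most `f+1` centers among
its neighbors; every used center has at least `T` clients; and every vertex has fewer than `T`
neighbors that are "deficient" (fewer than `f+1` centers) and not served by it. -/
def FDGood (G : SimpleGraph V) (f T : ℕ) (c : V → Finset V) : Prop :=
  (∀ v, ∀ s ∈ c v, G.Adj v s) ∧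
  (∀ v, (c v).card ≤ f + 1) ∧
  (∀ s : V, (∃ v, s ∈ c v) → T ≤ (univ.filter fun v => s ∈ c v).card) ∧
  (∀ u : V, (univ.filter fun v => G.Adj u v ∧ (c v).card ≤ f ∧ u ∉ c v).card < T)

lemma exists_FDGood (G : SimpleGraph V) (f T : ℕ) (hT : 0 < T) :
    ∃ c : V → Finset V, FDGood G f T c := by
  classical
  let Q : (V → Finset V) → Prop := fun c =>
    (∀ v, ∀ s ∈ c v, G.Adj v s) ∧ (∀ v, (c v).card ≤ f + 1) ∧
    (∀ s : V, (∃ v, s ∈ c v) → T ≤ (univ.filter fun v => s ∈ c v).card)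
  have h0 : Q (fun _ => ∅) := ⟨fun v s hs => absurd hs (Finset.notMem_empty s),
    fun v => by simp, fun s hs => absurd hs (by simp)⟩
  obtain ⟨c, hcQ, hmax⟩ := Finset.exists_max_image ((univ : Finset (V → Finset V)).filter Q)
      (fun c => ∑ v, (c v).card) ⟨_, Finset.mem_filter.mpr ⟨Finset.mem_univ _, h0⟩⟩
  rw [Finset.mem_filter] at hcQ
  obtain ⟨-, h1, h2, h3⟩ := hcQ
  refine ⟨c, h1, h2, h3, ?_⟩
  intro u
  by_contra hcon
  push_neg at hcon
  set A := univ.filter fun v => G.Adj u v ∧ (c v).card ≤ f ∧ u ∉ c v with hA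
  have hmemA : ∀ v ∈ A, G.Adj u v ∧ (c v).card ≤ f ∧ u ∉ c v :=
    fun v hv => (Finset.mem_filter.mp hv).2
  set c' : V → Finset V := fun v => if v ∈ A then insert u (c v) else c v with hc'
  have hQ' : Q c' := by
    refine ⟨?_, ?_, ?_⟩
    · intro v s hs
      by_cases hv : v ∈ A
      · simp only [hc', if_pos hv] at hs
        rcases Finset.mem_insert.mp hs with rfl | hs'
        · exact ((hmemA v hv).1).symm
        · exact h1 v s hs'
      · simp only [hc', if_neg hv] at hs
        exact h1 v s hs
    · intro v
      by_cases hv : v ∈ A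
      · simp only [hc', if_pos hv]
        calc (insert u (c v)).card ≤ (c v).card + 1 := Finset.card_insert_le _ _
          _ ≤ f + 1 := by have := (hmemA v hv).2.1; omega
      · simp only [hc', if_neg hv]; exact h2 v
    · rintro s ⟨v0, hs0⟩
      by_cases hsu : s = u
      · subst hsu
        have hsub : A ⊆ univ.filter fun v => s ∈ c' v := by
          intro v hv
          refine Finset.mem_filter.mpr ⟨Finset.mem_univ _, ?_⟩
          simp only [hc', if_pos hv]
          exact Finset.mem_insert_self _ _
        exact le_trans hcon (Finset.card_le_card hsub)
      · have hs0' : s ∈ c v0 := by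
          by_cases hv0 : v0 ∈ A
          · simp only [hc', if_pos hv0] at hs0
            rcases Finset.mem_insert.mp hs0 with rfl | h
            · exact absurd rfl hsu
            · exact h
          · simpa only [hc', if_neg hv0] using hs0
        refine (h3 s ⟨v0, hs0'⟩).trans (Finset.card_le_card ?_)
        intro v hv
        rw [Finset.mem_filter] at hv ⊢
        refine ⟨hv.1, ?_⟩
        by_cases hvA : v ∈ A
        · simp only [hc', if_pos hvA]; exact Finset.mem_insert_of_mem hv.2
        · simpa only [hc', if_neg hvA] using hv.2
  have hsum := hmax c' (Finset.mem_filter.mpr ⟨Finset.mem_univ _, hQ'⟩)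
  have hlt : ∑ v, (c v).card < ∑ v, (c' v).card := by
    apply Finset.sum_lt_sum
    · intro i _
      by_cases hi : i ∈ A
      · simp only [hc', if_pos hi]
        exact Finset.card_le_card (Finset.subset_insert _ _)
      · simp only [hc', if_neg hi]; exact le_refl _
    · obtain ⟨i, hi⟩ : A.Nonempty := Finset.card_pos.mp (lt_of_lt_of_le hT hcon)
      refine ⟨i, Finset.mem_univ _, ?_⟩
      simp only [hc', if_pos hi]
      rw [Finset.card_insert_of_notMem (hmemA i hi).2.2]
      omega
  omega

variable (G : SimpleGraph V) (f : ℕ) (c : V → Finset V)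

/-- Neighbors of `u` in the cluster of `s`. -/
def FDW (u s : V) : Finset V := univ.filter fun w => G.Adj u w ∧ s ∈ c w

/-- A selection of at most `2f+1` neighbors of `u` in the cluster of `s`. -/
def FDP (u s : V) : Finset V :=
  if h : (FDW G c u s).card ≤ 2 * f + 1 then FDW G c u s
  else (Finset.exists_subset_card_eq (le_of_not_ge h) |>.choose)

lemma FDP_subset (u s : V) : FDP G f c u s ⊆ FDW G c u s := by
  unfold FDP
  split
  · exact Finset.Subset.refl _
  · exact (Finset.exists_subset_card_eq (le_of_not_ge ‹_›) |>.choose_spec).1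

lemma FDP_card_le (u s : V) : (FDP G f c u s).card ≤ 2 * f + 1 := by
  unfold FDP
  split
  · assumption
  · exact le_of_eq (Finset.exists_subset_card_eq (le_of_not_ge ‹_›) |>.choose_spec).2

lemma FDP_full {u s v : V} (hv : v ∈ FDW G c u s) (hv' : v ∉ FDP G f c u s) :
    (FDP G f c u s).card = 2 * f + 1 := by
  revert hv'
  unfold FDP
  split
  · intro hv'; exact absurd hv hv'
  · intro _; exact (Finset.exists_subset_card_eq (le_of_not_ge ‹_›) |>.choose_spec).2

/-- The spanner. -/
def FDH : SimpleGraph V where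
  Adj u v := G.Adj u v ∧ (u ∈ c v ∨ v ∈ c u ∨ (∃ s, v ∈ FDP G f c u s) ∨
    (∃ s, u ∈ FDP G f c v s) ∨ ((c v).card ≤ f ∧ u ∉ c v) ∨ ((c u).card ≤ f ∧ v ∉ c u))
  symm := by
    refine ⟨?_⟩
    rintro u v ⟨h, h2⟩
    exact ⟨h.symm, by tauto⟩
  loopless := ⟨fun v h => G.loopless.irrefl v h.1⟩

lemma FDH_le : FDH G f c ≤ G := fun _ _ h => h.1

/-- Counting faulty edges at a vertex. -/
lemma card_faulty {F : Set (Sym2 V)} {f : ℕ} (hdeg : DegLE F f) (x : V) (D : Finset V) :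
    (D.filter fun y => s(x, y) ∈ F).card ≤ f := by
  have hdx := hdeg x
  set D' : Finset V := D.filter fun y => s(x, y) ∈ F with hD'
  have hinj : Set.InjOn (fun y => s(x, y)) D' := by
    intro a _ b _ hab
    exact Sym2.congr_right.mp hab
  have hcard : D'.card = (D'.image fun y => s(x, y)).card :=
    (Finset.card_image_of_injOn hinj).symm
  rw [hcard]
  have hsub : ↑(D'.image fun y => s(x, y)) ⊆ {e ∈ F | x ∈ e} := by
    intro e he
    simp only [Finset.coe_image, Set.mem_image, Finset.mem_coe] at he
    obtain ⟨y, hy, rfl⟩ := he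
    have hyF : s(x, y) ∈ F := (Finset.mem_filter.mp hy).2
    exact ⟨hyF, Sym2.mem_mk_left x y⟩
  calc (D'.image fun y => s(x, y)).card
      = (↑(D'.image fun y => s(x, y)) : Set (Sym2 V)).ncard := (Set.ncard_coe_finset _).symm
    _ ≤ {e ∈ F | x ∈ e}.ncard := Set.ncard_le_ncard hsub (Set.toFinite _)
    _ ≤ f := hdx

lemma exists_unfaulty {F : Set (Sym2 V)} {f : ℕ} (hdeg : DegLE F f) (x : V) (D : Finset V)
    (hcard : f + 1 ≤ D.card) : ∃ y ∈ D, s(x, y) ∉ F := by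
  by_contra h
  push_neg at h
  have heq : D.filter (fun y => s(x, y) ∈ F) = D := Finset.filter_eq_self.mpr h
  have := card_faulty hdeg x D
  rw [heq] at this
  omega

lemma FD_edge_stretch {T : ℕ} (hG : FDGood G f T c) {F : Set (Sym2 V)} (hdeg : DegLE F f)
    {u v : V} (huv : G.Adj u v) (hF : s(u, v) ∉ F) :
    ((FDH G f c).deleteEdges F).edist u v ≤ 3 := by
  obtain ⟨hg1, hg2, hg3, hg4⟩ := hG
  by_cases hH : (FDH G f c).Adj u v
  · have h : ((FDH G f c).deleteEdges F).Adj u v := SimpleGraph.deleteEdges_adj.mpr ⟨hH, hF⟩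
    calc ((FDH G f c).deleteEdges F).edist u v ≤ (h.toWalk.length : ℕ∞) :=
          SimpleGraph.edist_le _
      _ ≤ 3 := by simp [SimpleGraph.Walk.length_cons]
  · have hu_not : u ∉ c v := fun h => hH ⟨huv, Or.inl h⟩
    have h6 : ¬((c v).card ≤ f ∧ u ∉ c v) := fun h =>
      hH ⟨huv, Or.inr (Or.inr (Or.inr (Or.inr (Or.inl h))))⟩
    have hfull : f + 1 ≤ (c v).card := by
      by_contra hle
      exact h6 ⟨by omega, hu_not⟩
    obtain ⟨s, hs, hsF⟩ := exists_unfaulty hdeg v (c v) hfull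
    have hvW : v ∈ FDW G c u s := Finset.mem_filter.mpr ⟨Finset.mem_univ _, huv, hs⟩
    have hvP : v ∉ FDP G f c u s := fun h =>
      hH ⟨huv, Or.inr (Or.inr (Or.inl ⟨s, h⟩))⟩
    have hPcard : (FDP G f c u s).card = 2 * f + 1 := FDP_full G f c hvW hvP
    have hgood : ∃ w ∈ FDP G f c u s, s(u, w) ∉ F ∧ (w = s ∨ s(s, w) ∉ F) := by
      by_contra h
      push_neg at h
      have hsub : FDP G f c u s ⊆
          ((FDP G f c u s).filter fun w => s(u, w) ∈ F) ∪
            (((FDP G f c u s).erase s).filter fun w => s(s, w) ∈ F) := by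
        intro w hw
        by_cases hwu : s(u, w) ∈ F
        · exact Finset.mem_union_left _ (Finset.mem_filter.mpr ⟨hw, hwu⟩)
        · have := h w hw hwu
          refine Finset.mem_union_right _ (Finset.mem_filter.mpr
            ⟨Finset.mem_erase.mpr ⟨?_, hw⟩, ?_⟩)
          · exact this.1
          · exact this.2
      have hc1 := card_faulty hdeg u (FDP G f c u s)
      have hc2 := card_faulty hdeg s ((FDP G f c u s).erase s)
      have := Finset.card_le_card hsub
      have hcu := Finset.card_union_le ((FDP G f c u s).filter fun w => s(u, w) ∈ F)
        (((FDP G f c u s).erase s).filter fun w => s(s, w) ∈ F)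
      omega
    obtain ⟨w, hwP, hwuF, hws⟩ := hgood
    have hadj : G.Adj u w ∧ s ∈ c w := (Finset.mem_filter.mp (FDP_subset G f c u s hwP)).2
    have e1 : ((FDH G f c).deleteEdges F).Adj u w :=
      SimpleGraph.deleteEdges_adj.mpr
        ⟨⟨hadj.1, Or.inr (Or.inr (Or.inl ⟨s, hwP⟩))⟩, hwuF⟩
    have e3 : ((FDH G f c).deleteEdges F).Adj s v := by
      refine SimpleGraph.deleteEdges_adj.mpr ⟨⟨(hg1 v s hs).symm, Or.inl hs⟩, ?_⟩
      rw [Sym2.eq_swap]; exact hsF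
    rcases hws with rfl | hwsF
    · -- w = s : path u - s - v
      refine le_trans (SimpleGraph.edist_le
        (SimpleGraph.Walk.cons e1 (SimpleGraph.Walk.cons e3 SimpleGraph.Walk.nil))) ?_
      norm_num [SimpleGraph.Walk.length_cons]
    · have e2 : ((FDH G f c).deleteEdges F).Adj w s := by
        refine SimpleGraph.deleteEdges_adj.mpr ⟨⟨hg1 w s hadj.2, Or.inr (Or.inl hadj.2)⟩, ?_⟩
        rw [Sym2.eq_swap]; exact hwsF
      refine le_trans (SimpleGraph.edist_le (SimpleGraph.Walk.cons e1
        (SimpleGraph.Walk.cons e2 (SimpleGraph.Walk.cons e3 SimpleGraph.Walk.nil)))) ?_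
      norm_num [SimpleGraph.Walk.length_cons]

lemma FD_stretch {T : ℕ} (hG : FDGood G f T c) (F : Set (Sym2 V)) (hdeg : DegLE F f)
    (u v : V) :
    ((FDH G f c).deleteEdges F).edist u v ≤ 3 * (G.deleteEdges F).edist u v := by
  rcases eq_or_ne ((G.deleteEdges F).edist u v) ⊤ with h | h
  · rw [h, ENat.mul_top (by norm_num : (3 : ℕ∞) ≠ 0)]
    exact le_top
  · obtain ⟨p, hp⟩ := SimpleGraph.exists_walk_of_edist_ne_top h
    rw [← hp]
    clear hp h
    induction p with
    | nil => simp
    | @cons a x b hadj q ih =>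
      have hadj' := SimpleGraph.deleteEdges_adj.mp hadj
      have h1 := FD_edge_stretch G f c hG hdeg hadj'.1 hadj'.2
      calc ((FDH G f c).deleteEdges F).edist a b
          ≤ ((FDH G f c).deleteEdges F).edist a x + ((FDH G f c).deleteEdges F).edist x b :=
            SimpleGraph.edist_triangle
        _ ≤ 3 + 3 * (q.length : ℕ∞) := add_le_add h1 ih
        _ = 3 * (((SimpleGraph.Walk.cons hadj q).length : ℕ∞)) := by
            rw [SimpleGraph.Walk.length_cons]
            push_cast
            ring

/-- The set of used centers. -/
def FDS : Finset V := univ.filter fun s => ∃ v, s ∈ c v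

lemma FDS_card {T : ℕ} (hG : FDGood G f T c) :
    (FDS c).card * T ≤ Fintype.card V * (f + 1) := by
  obtain ⟨hg1, hg2, hg3, hg4⟩ := hG
  have h1 : (FDS c).card • T ≤ ∑ s ∈ FDS c, (univ.filter fun v => s ∈ c v).card :=
    Finset.card_nsmul_le_sum _ _ _ fun s hs => hg3 s (Finset.mem_filter.mp hs).2
  have h2 : ∑ s ∈ FDS c, (univ.filter fun v => s ∈ c v).card ≤ Fintype.card V * (f + 1) := by
    have : ∀ s, (univ.filter fun v => s ∈ c v).card = ∑ v : V, if s ∈ c v then 1 else 0 := by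
      intro s; rw [Finset.card_filter]
    simp_rw [this]
    rw [Finset.sum_comm]
    calc ∑ v : V, ∑ s ∈ FDS c, (if s ∈ c v then 1 else 0)
        ≤ ∑ v : V, (f + 1) := by
          refine Finset.sum_le_sum fun v _ => ?_
          rw [← Finset.card_filter]
          exact le_trans (Finset.card_le_card fun i hi => (Finset.mem_filter.mp hi).2) (hg2 v)
      _ = Fintype.card V * (f + 1) := by
          rw [Finset.sum_const, Finset.card_univ, smul_eq_mul]
  rw [smul_eq_mul] at h1
  exact h1.trans h2

lemma FDH_card {T : ℕ} (hG : FDGood G f T c) :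
    (FDH G f c).edgeSet.ncard ≤
      Fintype.card V * (f + 1) + Fintype.card V * ((FDS c).card * (2 * f + 1)) +
        Fintype.card V * T := by
  obtain ⟨hg1, hg2, hg3, hg4⟩ := hG
  set E1 : Finset (Sym2 V) := univ.biUnion (fun v => (c v).image fun s => s(v, s)) with hE1
  set E2 : Finset (Sym2 V) := univ.biUnion
    (fun u => (FDS c).biUnion fun s => (FDP G f c u s).image fun w => s(u, w)) with hE2
  set E3 : Finset (Sym2 V) := univ.biUnion
    (fun u => (univ.filter fun v => G.Adj u v ∧ (c v).card ≤ f ∧ u ∉ c v).image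
      fun v => s(u, v)) with hE3
  have hcov : (FDH G f c).edgeSet ⊆ ↑(E1 ∪ E2 ∪ E3) := by
    intro e he
    induction e using Sym2.ind with
    | _ u v =>
      rw [SimpleGraph.mem_edgeSet] at he
      obtain ⟨hadj, hd⟩ := he
      rw [Finset.mem_coe, Finset.mem_union, Finset.mem_union]
      rcases hd with h | h | ⟨s, h⟩ | ⟨s, h⟩ | h | h
      · exact Or.inl (Or.inl (Finset.mem_biUnion.mpr ⟨v, Finset.mem_univ _,
          Finset.mem_image.mpr ⟨u, h, (Sym2.eq_swap)⟩⟩))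
      · exact Or.inl (Or.inl (Finset.mem_biUnion.mpr ⟨u, Finset.mem_univ _,
          Finset.mem_image.mpr ⟨v, h, rfl⟩⟩))
      · have hs : s ∈ c v := (Finset.mem_filter.mp (FDP_subset G f c u s h)).2.2
        exact Or.inl (Or.inr (Finset.mem_biUnion.mpr ⟨u, Finset.mem_univ _,
          Finset.mem_biUnion.mpr ⟨s, Finset.mem_filter.mpr ⟨Finset.mem_univ _, v, hs⟩,
            Finset.mem_image.mpr ⟨v, h, rfl⟩⟩⟩))
      · have hs : s ∈ c u := (Finset.mem_filter.mp (FDP_subset G f c v s h)).2.2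
        exact Or.inl (Or.inr (Finset.mem_biUnion.mpr ⟨v, Finset.mem_univ _,
          Finset.mem_biUnion.mpr ⟨s, Finset.mem_filter.mpr ⟨Finset.mem_univ _, u, hs⟩,
            Finset.mem_image.mpr ⟨u, h, Sym2.eq_swap⟩⟩⟩))
      · exact Or.inr (Finset.mem_biUnion.mpr ⟨u, Finset.mem_univ _,
          Finset.mem_image.mpr ⟨v, Finset.mem_filter.mpr ⟨Finset.mem_univ _, hadj, h⟩, rfl⟩⟩)
      · exact Or.inr (Finset.mem_biUnion.mpr ⟨v, Finset.mem_univ _,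
          Finset.mem_image.mpr ⟨u, Finset.mem_filter.mpr ⟨Finset.mem_univ _, hadj.symm, h⟩,
            Sym2.eq_swap⟩⟩)
  have h1 : E1.card ≤ Fintype.card V * (f + 1) := by
    refine le_trans Finset.card_biUnion_le ?_
    calc ∑ v : V, ((c v).image fun s => s(v, s)).card
        ≤ ∑ v : V, (f + 1) :=
          Finset.sum_le_sum fun v _ => le_trans (Finset.card_image_le) (hg2 v)
      _ = Fintype.card V * (f + 1) := by rw [Finset.sum_const, Finset.card_univ, smul_eq_mul]
  have h2 : E2.card ≤ Fintype.card V * ((FDS c).card * (2 * f + 1)) := by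
    refine le_trans Finset.card_biUnion_le ?_
    have hin : ∀ u : V,
        ((FDS c).biUnion fun s => (FDP G f c u s).image fun w => s(u, w)).card ≤
          (FDS c).card * (2 * f + 1) := by
      intro u
      refine le_trans Finset.card_biUnion_le ?_
      calc ∑ s ∈ FDS c, ((FDP G f c u s).image fun w => s(u, w)).card
          ≤ ∑ _s ∈ FDS c, (2 * f + 1) :=
            Finset.sum_le_sum fun s _ => le_trans Finset.card_image_le (FDP_card_le G f c u s)
        _ = (FDS c).card * (2 * f + 1) := by rw [Finset.sum_const, smul_eq_mul]
    calc ∑ u : V, ((FDS c).biUnion fun s => (FDP G f c u s).image fun w => s(u, w)).card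
        ≤ ∑ _u : V, (FDS c).card * (2 * f + 1) := Finset.sum_le_sum fun u _ => hin u
      _ = Fintype.card V * ((FDS c).card * (2 * f + 1)) := by
          rw [Finset.sum_const, Finset.card_univ, smul_eq_mul]
  have h3 : E3.card ≤ Fintype.card V * T := by
    refine le_trans Finset.card_biUnion_le ?_
    calc ∑ u : V,
        ((univ.filter fun v => G.Adj u v ∧ (c v).card ≤ f ∧ u ∉ c v).image
          fun v => s(u, v)).card
        ≤ ∑ _u : V, T := Finset.sum_le_sum fun u _ =>
            le_trans Finset.card_image_le (le_of_lt (hg4 u))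
      _ = Fintype.card V * T := by rw [Finset.sum_const, Finset.card_univ, smul_eq_mul]
  calc (FDH G f c).edgeSet.ncard
      ≤ (↑(E1 ∪ E2 ∪ E3) : Set (Sym2 V)).ncard := Set.ncard_le_ncard hcov (Set.toFinite _)
    _ = (E1 ∪ E2 ∪ E3).card := Set.ncard_coe_finset _
    _ ≤ E1.card + E2.card + E3.card :=
        le_trans (Finset.card_union_le _ _) (by
          have := Finset.card_union_le E1 E2
          omega)
    _ ≤ _ := by omega

end FDConstruction

set_option maxHeartbeats 1600000 in
/-- There are absolute constants `C, c > 0` such that every `n`-vertex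
unweighted graph admits an `f`-FD `3`-spanner with at most `C·f·n^{3/2}·(log n)^c` edges. -/
theorem fd_three_spanner_exists :
    ∃ C c : ℝ, 0 < C ∧ 0 < c ∧
      ∀ (n f : ℕ), 0 < n → 0 < f →
        ∀ (V : Type) [Fintype V], Fintype.card V = n →
          ∀ G : SimpleGraph V,
            ∃ H : SimpleGraph V,
              IsFDSpanner G H f 3 ∧
              (H.edgeSet.ncard : ℝ) ≤ C * f * (n : ℝ) ^ ((3 : ℝ) / 2) * Real.log n ^ c := by
  refine ⟨100, 1, by norm_num, by norm_num, ?_⟩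
  intro n f hn hf V _ hcard G
  classical
  set T := (f + 1) * (Nat.sqrt n + 1) with hT
  have hTpos : 0 < T := Nat.mul_pos (by omega) (by omega)
  obtain ⟨c, hG⟩ := exists_FDGood G f T hTpos
  refine ⟨FDH G f c, ⟨FDH_le G f c, fun F hF hdeg u v => by
    simpa using FD_stretch G f c hG F hdeg u v⟩, ?_⟩
  by_cases hn1 : n = 1
  · have hsub : Subsingleton V := Fintype.card_le_one_iff_subsingleton.mp (by omega)
    have h0 : (FDH G f c).edgeSet = ∅ := by
      ext e
      induction e using Sym2.ind with
      | _ x y =>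
        simp only [SimpleGraph.mem_edgeSet, Set.mem_empty_iff_false, iff_false]
        intro h
        exact ((FDH G f c).ne_of_adj h) (Subsingleton.elim x y)
    rw [h0]
    subst hn1
    simp [Real.log_one, Real.rpow_one]
  · have hn2 : 2 ≤ n := by omega
    have hm := FDH_card G f c hG
    have hS := FDS_card G f c hG
    rw [hcard] at hm hS
    -- cast to ℝ
    have hmR : ((FDH G f c).edgeSet.ncard : ℝ) ≤
        (n : ℝ) * ((f : ℝ) + 1) + (n : ℝ) * (((FDS c).card : ℝ) * (2 * (f : ℝ) + 1)) +
          (n : ℝ) * (((f : ℝ) + 1) * ((Nat.sqrt n : ℝ) + 1)) := by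
      rw [hT] at hm
      exact_mod_cast hm
    have hSR : ((FDS c).card : ℝ) * (((f : ℝ) + 1) * ((Nat.sqrt n : ℝ) + 1)) ≤
        (n : ℝ) * ((f : ℝ) + 1) := by
      rw [hT] at hS
      exact_mod_cast hS
    clear hm hS hG hTpos hT
    have hN2 : (2 : ℝ) ≤ (n : ℝ) := by exact_mod_cast hn2
    have hF1 : (1 : ℝ) ≤ (f : ℝ) := by exact_mod_cast hf
    have hs10 : (0 : ℝ) ≤ ((FDS c).card : ℝ) := by positivity
    have hr10 : (0 : ℝ) ≤ ((Nat.sqrt n : ℕ) : ℝ) := by positivity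
    have hsq0 : (0 : ℝ) ≤ Real.sqrt n := Real.sqrt_nonneg _
    have hsqsq : Real.sqrt n * Real.sqrt n = (n : ℝ) := Real.mul_self_sqrt (by linarith)
    have hsq1 : (1 : ℝ) ≤ Real.sqrt n := by nlinarith
    have hrle : ((Nat.sqrt n : ℕ) : ℝ) * ((Nat.sqrt n : ℕ) : ℝ) ≤ (n : ℝ) := by
      exact_mod_cast Nat.sqrt_le n
    have hrgt : (n : ℝ) < (((Nat.sqrt n : ℕ) : ℝ) + 1) * (((Nat.sqrt n : ℕ) : ℝ) + 1) := by
      have := Nat.lt_succ_sqrt n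
      exact_mod_cast this
    have hsqr1 : Real.sqrt n ≤ ((Nat.sqrt n : ℕ) : ℝ) + 1 := by nlinarith
    have hr1sq : ((Nat.sqrt n : ℕ) : ℝ) ≤ Real.sqrt n := by nlinarith
    have hs1sq : ((FDS c).card : ℝ) ≤ Real.sqrt n := by
      nlinarith [mul_le_mul_of_nonneg_left (mul_le_mul_of_nonneg_left hsqr1
        (show (0:ℝ) ≤ (f : ℝ) + 1 by linarith)) hs10,
        mul_pos (show (0:ℝ) < Real.sqrt n by linarith)
          (show (0:ℝ) < (f : ℝ) + 1 by linarith)]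
    have hm9 : ((FDH G f c).edgeSet.ncard : ℝ) ≤ 9 * (f : ℝ) * ((n : ℝ) * Real.sqrt n) := by
      have t1 : (n : ℝ) * ((f : ℝ) + 1) ≤ 2 * (f : ℝ) * ((n : ℝ) * Real.sqrt n) := by
        nlinarith [mul_le_mul_of_nonneg_left hsq1
          (show (0:ℝ) ≤ 2 * (f : ℝ) * (n : ℝ) by positivity)]
      have t2 : (n : ℝ) * (((FDS c).card : ℝ) * (2 * (f : ℝ) + 1)) ≤
          3 * (f : ℝ) * ((n : ℝ) * Real.sqrt n) := by
        nlinarith [mul_le_mul_of_nonneg_left hs1sq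
          (show (0:ℝ) ≤ (n : ℝ) * (2 * (f : ℝ) + 1) by positivity),
          mul_le_mul_of_nonneg_left (show 2 * (f : ℝ) + 1 ≤ 3 * (f : ℝ) by linarith)
            (show (0:ℝ) ≤ (n : ℝ) * Real.sqrt n by positivity)]
      have t3 : (n : ℝ) * (((f : ℝ) + 1) * (((Nat.sqrt n : ℕ) : ℝ) + 1)) ≤
          4 * (f : ℝ) * ((n : ℝ) * Real.sqrt n) := by
        nlinarith [mul_le_mul_of_nonneg_left
          (show ((Nat.sqrt n : ℕ) : ℝ) + 1 ≤ 2 * Real.sqrt n by linarith)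
          (show (0:ℝ) ≤ (n : ℝ) * ((f : ℝ) + 1) by positivity),
          mul_le_mul_of_nonneg_left (show (f : ℝ) + 1 ≤ 2 * (f : ℝ) by linarith)
            (show (0:ℝ) ≤ (n : ℝ) * (2 * Real.sqrt n) by positivity)]
      linarith
    have h32 : (n : ℝ) ^ ((3 : ℝ) / 2) = (n : ℝ) * Real.sqrt n := by
      rw [show (3 : ℝ) / 2 = 1 + 1 / 2 by norm_num, Real.rpow_add (by linarith), Real.rpow_one,
        Real.sqrt_eq_rpow]
    have hlog : (0.6 : ℝ) ≤ Real.log n := by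
      have h2 : Real.log 2 ≤ Real.log n := Real.log_le_log (by norm_num) (by linarith)
      have := Real.log_two_gt_d9
      linarith
    rw [Real.rpow_one, h32]
    nlinarith [mul_nonneg (show (0:ℝ) ≤ (f : ℝ) * ((n : ℝ) * Real.sqrt n) by positivity)
      (show (0:ℝ) ≤ Real.log n - 0.6 by linarith)]
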